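/- Let σ > 0, let X be a random variable with the centered Gaussian law N(0,σ²), and let l : ℝ² → ℝ be continuously differentiable with bounded partial derivatives. Then the function f_l(x₁, x₂) := −σ⁻² ∫₀¹ (2√(t(1−t)))⁻¹ · E[X · l(√t x₁ + √(1−t) X, x₂)] dt is differentiable in its second variable and satisfies sup_{(x₁,x₂)∈ℝ²} |∂₂f_l(x₁, x₂)| ≤ σ⁻¹ · √(π/2) · sup_{(x₁,x₂)∈ℝ²} |∂₂l(x₁, x₂)|. -/

import Mathlib

open MeasureTheory ProbabilityTheory Real Set
open scoped NNReal ENNReal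

section Helpers

lemma arcsin_deriv' {t : ℝ} (ht : t ∈ Ioo (0:ℝ) 1) :
    HasDerivAt (fun s => (1/2) * Real.arcsin (2*s-1)) ((2 * Real.sqrt (t*(1-t)))⁻¹) t := by
  have h1 : (2*t-1) ≠ -1 := by intro h; nlinarith [ht.1]
  have h2 : (2*t-1) ≠ 1 := by intro h; nlinarith [ht.2]
  have H := ((Real.hasDerivAt_arcsin h1 h2).comp t
    (((hasDerivAt_id t).const_mul 2).sub_const 1)).const_mul (1/2)
  have h4 : (1 - (2*t-1)^2) = 2^2 * (t * (1-t)) := by ring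
  have h6 : Real.sqrt (1 - (2*t-1)^2) = 2 * Real.sqrt (t*(1-t)) := by
    rw [h4, Real.sqrt_mul (by positivity : (0:ℝ) ≤ (2:ℝ)^2),
      Real.sqrt_sq (by norm_num : (0:ℝ) ≤ 2)]
  have h5 : (0:ℝ) < Real.sqrt (t*(1-t)) := Real.sqrt_pos.2 (by nlinarith [ht.1, ht.2])
  have heq : (1/2 : ℝ) * (1 / Real.sqrt (1 - (2*t-1)^2) * (2*1)) = (2 * Real.sqrt (t*(1-t)))⁻¹ := by
    rw [h6]; field_simp
  rw [heq] at H
  exact H.congr_deriv rfl |>.congr_of_eventuallyEq (by filter_upwards with s; simp [Function.comp])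

lemma Fa_cont' : ContinuousOn (fun s => (1/2) * Real.arcsin (2*s-1)) (Icc (0:ℝ) 1) :=
  (continuous_const.mul (Real.continuous_arcsin.comp
    ((continuous_const.mul continuous_id).sub continuous_const))).continuousOn

lemma g_intable : IntervalIntegrable (fun t => (2 * Real.sqrt (t*(1-t)))⁻¹) volume 0 1 := by
  rw [intervalIntegrable_iff_integrableOn_Ioc_of_le zero_le_one]
  exact intervalIntegral.integrableOn_deriv_of_nonneg Fa_cont'
    (fun x hx => arcsin_deriv' hx) (fun x hx => by positivity)

lemma g_integral : ∫ t in (0:ℝ)..1, (2 * Real.sqrt (t*(1-t)))⁻¹ = Real.pi / 2 := by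
  rw [intervalIntegral.integral_eq_sub_of_hasDerivAt_of_le zero_le_one Fa_cont'
    (fun x hx => arcsin_deriv' hx) g_intable]
  norm_num [Real.arcsin_one, Real.arcsin_neg_one]
  ring

lemma integral_Ioi_mul_exp {b : ℝ} (hb : 0 < b) :
    ∫ x in Ioi (0:ℝ), x * Real.exp (-b * x^2) = (2*b)⁻¹ := by
  have A : ∀ x : ℝ, HasDerivAt (fun x => -(2*b)⁻¹ * Real.exp (-b * x^2))
      (x * Real.exp (-b * x^2)) x := by
    intro x
    refine (((hasDerivAt_pow 2 x).const_mul (-b)).exp.const_mul (-(2*b)⁻¹)).congr_deriv ?_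
    field_simp
    norm_num
  have B : Filter.Tendsto (fun y : ℝ => -(2*b)⁻¹ * Real.exp (-b * y^2)) Filter.atTop
      (nhds (-(2*b)⁻¹ * 0)) := by
    refine Filter.Tendsto.const_mul _ ?_
    refine Real.tendsto_exp_atBot.comp ?_
    exact (Filter.tendsto_pow_atTop (two_ne_zero)).const_mul_atTop_of_neg (neg_lt_zero.2 hb)
  have := integral_Ioi_of_hasDerivAt_of_tendsto' (a := 0) (fun x _ => A x)
    (integrable_mul_exp_neg_mul_sq hb).integrableOn B
  rw [this]
  norm_num

lemma integral_abs_mul_exp {b : ℝ} (hb : 0 < b) :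
    ∫ x : ℝ, |x| * Real.exp (-b * x^2) = b⁻¹ := by
  have h : ∀ x : ℝ, |x| * Real.exp (-b * x^2) = (fun y => y * Real.exp (-b * y^2)) |x| := by
    intro x; simp [sq_abs]
  rw [funext h, integral_comp_abs (f := fun y => y * Real.exp (-b * y^2)),
    integral_Ioi_mul_exp hb]
  field_simp

lemma integrable_abs_mul_exp {b : ℝ} (hb : 0 < b) :
    Integrable (fun x : ℝ => |x| * Real.exp (-b * x^2)) := by
  have := (integrable_mul_exp_neg_mul_sq hb).abs
  refine this.congr (ae_of_all _ fun x => ?_)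
  simp only [abs_mul, abs_of_pos (Real.exp_pos _)]

lemma integrable_sq_mul_exp {b : ℝ} (hb : 0 < b) :
    Integrable (fun x : ℝ => x^2 * Real.exp (-b * x^2)) := by
  have := integrable_rpow_mul_exp_neg_mul_sq hb (s := 2) (by norm_num)
  refine this.congr (ae_of_all _ fun x => ?_)
  simp only []
  norm_cast

variable {v : ℝ≥0}

lemma gauss_pdf_eq (v : ℝ≥0) (x : ℝ) :
    gaussianPDFReal 0 v x
      = (Real.sqrt (2*Real.pi*v))⁻¹ * Real.exp (-(2*(v:ℝ))⁻¹ * x^2) := by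
  rw [gaussianPDFReal]
  simp only [sub_zero]
  congr 1
  ring

lemma gauss_integral_eq (hv : v ≠ 0) (g : ℝ → ℝ) :
    ∫ x, g x ∂(gaussianReal 0 v) = ∫ x, gaussianPDFReal 0 v x * g x := by
  rw [gaussianReal_of_var_ne_zero _ hv]
  have h : (gaussianPDF 0 v) = fun x => ((Real.toNNReal (gaussianPDFReal 0 v x) : ℝ≥0) : ℝ≥0∞) :=
    rfl
  rw [h, integral_withDensity_eq_integral_smul
    ((measurable_gaussianPDFReal 0 v).real_toNNReal)]
  congr 1
  ext x
  rw [NNReal.smul_def, smul_eq_mul, Real.coe_toNNReal _ (gaussianPDFReal_nonneg 0 v x)]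

lemma gauss_integrable_iff (hv : v ≠ 0) {g : ℝ → ℝ} :
    Integrable g (gaussianReal 0 v) ↔ Integrable (fun x => gaussianPDFReal 0 v x * g x) := by
  rw [gaussianReal_of_var_ne_zero _ hv]
  have h : (gaussianPDF 0 v) = fun x => ((Real.toNNReal (gaussianPDFReal 0 v x) : ℝ≥0) : ℝ≥0∞) :=
    rfl
  rw [h, integrable_withDensity_iff_integrable_smul
    ((measurable_gaussianPDFReal 0 v).real_toNNReal)]
  constructor <;> intro h' <;> refine h'.congr (ae_of_all _ fun x => ?_) <;>
    simp only [NNReal.smul_def, smul_eq_mul, Real.coe_toNNReal _ (gaussianPDFReal_nonneg 0 v x)]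

lemma gauss_integrable_abs (hv : v ≠ 0) :
    Integrable (fun x : ℝ => |x|) (gaussianReal 0 v) := by
  have hv' : (0:ℝ) < (v:ℝ) := lt_of_le_of_ne (v.coe_nonneg) (by exact_mod_cast (Ne.symm hv))
  have hb : (0:ℝ) < (2*(v:ℝ))⁻¹ := by positivity
  rw [gauss_integrable_iff hv]
  have := (integrable_abs_mul_exp hb).const_mul ((Real.sqrt (2*Real.pi*v))⁻¹)
  refine this.congr (ae_of_all _ fun x => ?_)
  simp only []; rw [gauss_pdf_eq]; ring

lemma gauss_integrable_sq (hv : v ≠ 0) :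
    Integrable (fun x : ℝ => x^2) (gaussianReal 0 v) := by
  have hv' : (0:ℝ) < (v:ℝ) := lt_of_le_of_ne (v.coe_nonneg) (by exact_mod_cast (Ne.symm hv))
  have hb : (0:ℝ) < (2*(v:ℝ))⁻¹ := by positivity
  rw [gauss_integrable_iff hv]
  have := (integrable_sq_mul_exp hb).const_mul ((Real.sqrt (2*Real.pi*v))⁻¹)
  refine this.congr (ae_of_all _ fun x => ?_)
  simp only []; rw [gauss_pdf_eq]; ring

lemma gauss_abs_integral (hv : v ≠ 0) :
    ∫ x, |x| ∂(gaussianReal 0 v) = Real.sqrt (2*(v:ℝ)/Real.pi) := by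
  have hv' : (0:ℝ) < (v:ℝ) := lt_of_le_of_ne (v.coe_nonneg) (by exact_mod_cast (Ne.symm hv))
  have hb : (0:ℝ) < (2*(v:ℝ))⁻¹ := by positivity
  rw [gauss_integral_eq hv]
  have h : ∀ x : ℝ, gaussianPDFReal 0 v x * |x|
      = (Real.sqrt (2*Real.pi*v))⁻¹ * (|x| * Real.exp (-(2*(v:ℝ))⁻¹ * x^2)) := by
    intro x; rw [gauss_pdf_eq]; ring
  rw [funext h, integral_const_mul, integral_abs_mul_exp hb, inv_inv]
  have hs : (0:ℝ) < Real.sqrt (2*Real.pi*v) := Real.sqrt_pos.2 (by positivity)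
  rw [show (2*(v:ℝ)/Real.pi) = (2*(v:ℝ))^2 / (2*Real.pi*(v:ℝ)) by
      field_simp,
    Real.sqrt_div (by positivity) _, Real.sqrt_sq (by positivity)]
  rw [eq_div_iff hs.ne']
  field_simp

end Helpers

/-- Partial derivative of `f : ℝ × ℝ → ℝ` in its first variable. -/
noncomputable def pderiv1 (f : ℝ × ℝ → ℝ) (p : ℝ × ℝ) : ℝ :=
  deriv (fun y => f (y, p.2)) p.1

/-- Partial derivative of `f : ℝ × ℝ → ℝ` in its second variable. -/
noncomputable def pderiv2 (f : ℝ × ℝ → ℝ) (p : ℝ × ℝ) : ℝ :=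
  deriv (fun y => f (p.1, y)) p.2

/-- The Stein solution
`f_l(x₁,x₂) = −σ⁻² ∫₀¹ (2√(t(1−t)))⁻¹ E[X l(√t x₁ + √(1−t) X, x₂)] dt`. -/
noncomputable def steinSol {Ω : Type*} [MeasurableSpace Ω] (P : Measure Ω)
    (X : Ω → ℝ) (σ : ℝ) (l : ℝ × ℝ → ℝ) : ℝ × ℝ → ℝ :=
  fun p => -(σ ^ 2)⁻¹ *
    ∫ t in (0:ℝ)..1, (2 * Real.sqrt (t * (1 - t)))⁻¹ *
      ∫ ω, X ω * l (Real.sqrt t * p.1 + Real.sqrt (1 - t) * X ω, p.2) ∂P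

/-- **Third bound of Lemma `SolStein0`**: `f_l` is differentiable in its second
variable and `sup |∂₂ f_l| ≤ σ⁻¹ √(π/2) sup |∂₂ l|`. -/
theorem steinSol_pderiv2_bound
    {Ω : Type*} [MeasurableSpace Ω] (P : Measure Ω) [IsProbabilityMeasure P]
    (σ : ℝ) (hσ : 0 < σ) (X : Ω → ℝ) (hX : Measurable X)
    (hlaw : Measure.map X P = gaussianReal 0 (Real.toNNReal (σ ^ 2)))
    (l : ℝ × ℝ → ℝ) (hl : ContDiff ℝ 1 l)
    (hb1 : ∃ C, ∀ p, |pderiv1 l p| ≤ C) (hb2 : ∃ C, ∀ p, |pderiv2 l p| ≤ C) :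
    (∀ p : ℝ × ℝ, DifferentiableAt ℝ (fun y => steinSol P X σ l (p.1, y)) p.2) ∧
    ∀ C : ℝ, (∀ p, |pderiv2 l p| ≤ C) →
      ∀ p, |pderiv2 (steinSol P X σ l) p| ≤ σ⁻¹ * Real.sqrt (Real.pi / 2) * C := by
  classical
  obtain ⟨C₁, hC₁⟩ := hb1
  obtain ⟨C₂, hC₂⟩ := hb2
  have hC₁0 : 0 ≤ C₁ := (abs_nonneg _).trans (hC₁ (0,0))
  have hC₂0 : 0 ≤ C₂ := (abs_nonneg _).trans (hC₂ (0,0))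
  set v : ℝ≥0 := Real.toNNReal (σ ^ 2) with hvdef
  have hv : v ≠ 0 := by
    simp only [hvdef, ne_eq, Real.toNNReal_eq_zero, not_le]
    positivity
  have hvv : ((v:ℝ)) = σ^2 := Real.coe_toNNReal _ (sq_nonneg σ)
  -- derivatives of l
  have hld : Differentiable ℝ l := hl.differentiable one_ne_zero
  set D2 : ℝ × ℝ → ℝ := fun q => fderiv ℝ l q (0,1) with hD2def
  set D1 : ℝ × ℝ → ℝ := fun q => fderiv ℝ l q (1,0) with hD1def
  have key2 : ∀ a y : ℝ, HasDerivAt (fun y => l (a,y)) (D2 (a,y)) y := fun a y =>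
    (hld (a,y)).hasFDerivAt.comp_hasDerivAt y ((hasDerivAt_const y a).prodMk (hasDerivAt_id y))
  have key1 : ∀ x y : ℝ, HasDerivAt (fun x => l (x,y)) (D1 (x,y)) x := fun x y =>
    (hld (x,y)).hasFDerivAt.comp_hasDerivAt x ((hasDerivAt_id x).prodMk (hasDerivAt_const x y))
  have hpd2 : ∀ q : ℝ × ℝ, pderiv2 l q = D2 q := fun q => by
    rw [pderiv2, (key2 q.1 q.2).deriv]
  have hpd1 : ∀ q : ℝ × ℝ, pderiv1 l q = D1 q := fun q => by
    rw [pderiv1, (key1 q.1 q.2).deriv]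
  have hD2b : ∀ C : ℝ, (∀ q, |pderiv2 l q| ≤ C) → ∀ q, |D2 q| ≤ C := fun C hC q =>
    (hpd2 q) ▸ hC q
  have hD2cont : Continuous D2 :=
    (hl.continuous_fderiv one_ne_zero).clm_apply continuous_const
  -- growth of l
  have growth : ∀ x y : ℝ, |l (x,y)| ≤ |l (0,0)| + C₁ * |x| + C₂ * |y| := by
    intro x y
    have e1 : ‖l (x,y) - l (0,y)‖ ≤ C₁ * ‖x - 0‖ :=
      Convex.norm_image_sub_le_of_norm_hasDerivWithin_le
        (fun s _ => (key1 s y).hasDerivWithinAt)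
        (fun s _ => by rw [Real.norm_eq_abs, ← hpd1 (s,y)]; exact hC₁ (s,y))
        convex_univ (mem_univ 0) (mem_univ x)
    have e2 : ‖l (0,y) - l (0,0)‖ ≤ C₂ * ‖y - 0‖ :=
      Convex.norm_image_sub_le_of_norm_hasDerivWithin_le
        (fun s _ => (key2 0 s).hasDerivWithinAt)
        (fun s _ => by rw [Real.norm_eq_abs, ← hpd2 (0,s)]; exact hC₂ (0,s))
        convex_univ (mem_univ 0) (mem_univ y)
    simp only [Real.norm_eq_abs, sub_zero] at e1 e2
    calc |l (x,y)| = |(l (x,y) - l (0,y)) + (l (0,y) - l (0,0)) + l (0,0)| := by ring_nf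
      _ ≤ |l (x,y) - l (0,y)| + |l (0,y) - l (0,0)| + |l (0,0)| := by
          exact (abs_add_le _ _).trans (add_le_add_left (abs_add_le _ _) _)
      _ ≤ |l (0,0)| + C₁ * |x| + C₂ * |y| := by linarith
  -- integrability of |X| and X²
  have habs : Integrable (fun ω => |X ω|) P := by
    have h := gauss_integrable_abs hv
    rw [← hlaw] at h
    exact (integrable_map_measure continuous_abs.aestronglyMeasurable hX.aemeasurable).mp h
  have hsq : Integrable (fun ω => X ω ^ 2) P := by
    have h := gauss_integrable_sq hv
    rw [← hlaw] at h
    exact (integrable_map_measure (continuous_pow 2).aestronglyMeasurable hX.aemeasurable).mp h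
  set realM : ℝ := ∫ ω, |X ω| ∂P with hrealM
  have hM : realM = σ * Real.sqrt (2/Real.pi) := by
    rw [hrealM, ← integral_map hX.aemeasurable continuous_abs.aestronglyMeasurable, hlaw,
      gauss_abs_integral hv, hvv]
    rw [show (2 * σ^2 / Real.pi : ℝ) = σ^2 * (2/Real.pi) by ring,
      Real.sqrt_mul (sq_nonneg σ), Real.sqrt_sq hσ.le]
  have hM0 : 0 ≤ realM := by rw [hM]; positivity
  -- inner derivative
  have inner : ∀ x₁ : ℝ, ∀ t ∈ Set.Ioc (0:ℝ) 1, ∀ y₀ : ℝ,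
      HasDerivAt (fun y => ∫ ω, X ω * l (Real.sqrt t * x₁ + Real.sqrt (1-t) * X ω, y) ∂P)
        (∫ ω, X ω * D2 (Real.sqrt t * x₁ + Real.sqrt (1-t) * X ω, y₀) ∂P) y₀ := by
    intro x₁ t ht y₀
    set a : Ω → ℝ := fun ω => Real.sqrt t * x₁ + Real.sqrt (1-t) * X ω with hadef
    have hma : Measurable a := (hX.const_mul _).const_add _
    have hst : Real.sqrt t ≤ 1 := Real.sqrt_le_one.2 ht.2
    have hst2 : Real.sqrt (1-t) ≤ 1 := Real.sqrt_le_one.2 (by linarith [ht.1])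
    have haω : ∀ ω, |a ω| ≤ |x₁| + |X ω| := by
      intro ω
      calc |a ω| ≤ |Real.sqrt t * x₁| + |Real.sqrt (1-t) * X ω| := abs_add_le _ _
        _ = Real.sqrt t * |x₁| + Real.sqrt (1-t) * |X ω| := by
            rw [abs_mul, abs_mul, abs_of_nonneg (Real.sqrt_nonneg _),
              abs_of_nonneg (Real.sqrt_nonneg _)]
        _ ≤ |x₁| + |X ω| := by
            have h1 := mul_le_of_le_one_left (abs_nonneg x₁) hst
            have h2 := mul_le_of_le_one_left (abs_nonneg (X ω)) hst2
            linarith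
    have hmeasF : ∀ y : ℝ, AEStronglyMeasurable (fun ω => X ω * l (a ω, y)) P := fun y =>
      (hX.mul (hl.continuous.measurable.comp (hma.prodMk measurable_const))).aestronglyMeasurable
    refine (hasDerivAt_integral_of_dominated_loc_of_deriv_le (Metric.ball_mem_nhds _ one_pos)
      (Filter.Eventually.of_forall hmeasF) ?_
      (F' := fun y ω => X ω * D2 (a ω, y))
      ((hX.mul (hD2cont.measurable.comp (hma.prodMk measurable_const))).aestronglyMeasurable)
      (bound := fun ω => C₂ * |X ω|)
      (ae_of_all _ fun ω y _ => ?_)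
      (habs.const_mul C₂)
      (ae_of_all _ fun ω y _ => (key2 (a ω) y).const_mul (X ω))).2
    · -- integrability at y₀
      refine Integrable.mono'
        ((habs.const_mul (|l (0,0)| + C₁*|x₁| + C₂*|y₀|)).add (hsq.const_mul C₁))
        (hmeasF y₀) (ae_of_all _ fun ω => ?_)
      have h1 := growth (a ω) y₀
      have h2 := haω ω
      have h3 : |X ω * l (a ω, y₀)| = |X ω| * |l (a ω, y₀)| := abs_mul _ _
      have h4 : |X ω| * |X ω| = X ω ^ 2 := by rw [← sq_abs]; ring
      simp only [Pi.add_apply, Real.norm_eq_abs]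
      nlinarith [abs_nonneg (X ω), abs_nonneg (a ω), abs_nonneg (l (a ω, y₀)),
        mul_le_mul_of_nonneg_left h1 (abs_nonneg (X ω)),
        mul_le_mul_of_nonneg_left h2 (mul_nonneg hC₁0 (abs_nonneg (X ω)))]
    · -- bound for derivative
      rw [Real.norm_eq_abs, abs_mul]
      calc |X ω| * |D2 (a ω, y)| ≤ |X ω| * C₂ :=
            mul_le_mul_of_nonneg_left (hD2b C₂ hC₂ _) (abs_nonneg _)
        _ = C₂ * |X ω| := mul_comm _ _
  -- bound on inner integral of l
  have Gbnd : ∀ x₁ y₀ : ℝ, ∀ t ∈ Set.Ioc (0:ℝ) 1,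
      |∫ ω, X ω * l (Real.sqrt t * x₁ + Real.sqrt (1-t) * X ω, y₀) ∂P|
        ≤ (|l (0,0)| + C₁*|x₁| + C₂*|y₀|) * realM + C₁ * (∫ ω, X ω ^ 2 ∂P) := by
    intro x₁ y₀ t ht
    have hst : Real.sqrt t ≤ 1 := Real.sqrt_le_one.2 ht.2
    have hst2 : Real.sqrt (1-t) ≤ 1 := Real.sqrt_le_one.2 (by linarith [ht.1])
    have hb := norm_integral_le_of_norm_le
      ((habs.const_mul (|l (0,0)| + C₁*|x₁| + C₂*|y₀|)).add (hsq.const_mul C₁))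
      (ae_of_all _ (fun ω => ?_)
        : ∀ᵐ ω ∂P, ‖X ω * l (Real.sqrt t * x₁ + Real.sqrt (1-t) * X ω, y₀)‖
          ≤ (|l (0,0)| + C₁*|x₁| + C₂*|y₀|) * |X ω| + C₁ * X ω ^ 2)
    · rw [Real.norm_eq_abs] at hb
      refine hb.trans ?_
      simp only [Pi.add_apply]
      rw [integral_add (habs.const_mul _) (hsq.const_mul _), integral_const_mul,
        integral_const_mul]
    · have h1 := growth (Real.sqrt t * x₁ + Real.sqrt (1-t) * X ω) y₀
      have h2 : |Real.sqrt t * x₁ + Real.sqrt (1-t) * X ω| ≤ |x₁| + |X ω| := by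
        calc _ ≤ |Real.sqrt t * x₁| + |Real.sqrt (1-t) * X ω| := abs_add_le _ _
          _ = Real.sqrt t * |x₁| + Real.sqrt (1-t) * |X ω| := by
              rw [abs_mul, abs_mul, abs_of_nonneg (Real.sqrt_nonneg _),
                abs_of_nonneg (Real.sqrt_nonneg _)]
          _ ≤ |x₁| + |X ω| := by
              have g1 := mul_le_of_le_one_left (abs_nonneg x₁) hst
              have g2 := mul_le_of_le_one_left (abs_nonneg (X ω)) hst2
              linarith
      rw [Real.norm_eq_abs, abs_mul]
      nlinarith [abs_nonneg (X ω), abs_nonneg x₁, abs_nonneg y₀,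
        abs_nonneg (l (Real.sqrt t * x₁ + Real.sqrt (1-t) * X ω, y₀)), sq_abs (X ω),
        mul_le_mul_of_nonneg_left h1 (abs_nonneg (X ω)),
        mul_le_mul_of_nonneg_left h2 (mul_nonneg hC₁0 (abs_nonneg (X ω)))]
  -- bound on inner integral of D2
  have G'bnd : ∀ C : ℝ, (∀ q, |pderiv2 l q| ≤ C) → ∀ x₁ y t : ℝ,
      |∫ ω, X ω * D2 (Real.sqrt t * x₁ + Real.sqrt (1-t) * X ω, y) ∂P| ≤ C * realM := by
    intro C hC x₁ y t
    have hb := norm_integral_le_of_norm_le (habs.const_mul C)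
      (ae_of_all _ fun ω => ?_
        : ∀ᵐ ω ∂P, ‖X ω * D2 (Real.sqrt t * x₁ + Real.sqrt (1-t) * X ω, y)‖ ≤ C * |X ω|)
    · rw [Real.norm_eq_abs] at hb
      refine hb.trans ?_
      rw [integral_const_mul]
    · rw [Real.norm_eq_abs, abs_mul]
      calc |X ω| * |D2 _| ≤ |X ω| * C := mul_le_mul_of_nonneg_left (hD2b C hC _) (abs_nonneg _)
        _ = C * |X ω| := mul_comm _ _
  -- measurability in t
  have hgm : Measurable (fun t : ℝ => (2 * Real.sqrt (t*(1-t)))⁻¹) :=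
    ((measurable_const.mul ((measurable_id.mul (measurable_const.sub measurable_id)).sqrt))).inv
  have hGm : ∀ x₁ y : ℝ, StronglyMeasurable
      (fun t : ℝ => ∫ ω, X ω * l (Real.sqrt t * x₁ + Real.sqrt (1-t) * X ω, y) ∂P) := by
    intro x₁ y
    have hf : StronglyMeasurable (fun q : ℝ × Ω =>
        X q.2 * l (Real.sqrt q.1 * x₁ + Real.sqrt (1-q.1) * X q.2, y)) := by
      apply Measurable.stronglyMeasurable
      exact (hX.comp measurable_snd).mul (hl.continuous.measurable.comp
        (((measurable_fst.sqrt.mul_const x₁).add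
          ((measurable_const.sub measurable_fst).sqrt.mul (hX.comp measurable_snd))).prodMk
          measurable_const))
    exact hf.integral_prod_right'
  have hG'm : ∀ x₁ y : ℝ, StronglyMeasurable
      (fun t : ℝ => ∫ ω, X ω * D2 (Real.sqrt t * x₁ + Real.sqrt (1-t) * X ω, y) ∂P) := by
    intro x₁ y
    have hf : StronglyMeasurable (fun q : ℝ × Ω =>
        X q.2 * D2 (Real.sqrt q.1 * x₁ + Real.sqrt (1-q.1) * X q.2, y)) := by
      apply Measurable.stronglyMeasurable
      exact (hX.comp measurable_snd).mul (hD2cont.measurable.comp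
        (((measurable_fst.sqrt.mul_const x₁).add
          ((measurable_const.sub measurable_fst).sqrt.mul (hX.comp measurable_snd))).prodMk
          measurable_const))
    exact hf.integral_prod_right'
  have hg0 : ∀ t : ℝ, 0 ≤ (2 * Real.sqrt (t*(1-t)))⁻¹ := fun t => by positivity
  have huIoc : Set.uIoc (0:ℝ) 1 = Set.Ioc (0:ℝ) 1 := Set.uIoc_of_le zero_le_one
  -- outer derivative
  have outer : ∀ x₁ y₀ : ℝ,
      HasDerivAt (fun y => ∫ t in (0:ℝ)..1, (2 * Real.sqrt (t*(1-t)))⁻¹ *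
          ∫ ω, X ω * l (Real.sqrt t * x₁ + Real.sqrt (1-t) * X ω, y) ∂P)
        (∫ t in (0:ℝ)..1, (2 * Real.sqrt (t*(1-t)))⁻¹ *
          ∫ ω, X ω * D2 (Real.sqrt t * x₁ + Real.sqrt (1-t) * X ω, y₀) ∂P) y₀ := by
    intro x₁ y₀
    set B : ℝ := (|l (0,0)| + C₁*|x₁| + C₂*|y₀|) * realM + C₁ * (∫ ω, X ω ^ 2 ∂P) with hBdef
    refine (intervalIntegral.hasDerivAt_integral_of_dominated_loc_of_deriv_le (Metric.ball_mem_nhds _ one_pos)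
      (Filter.Eventually.of_forall fun y =>
        ((hgm.mul (hGm x₁ y).measurable).aestronglyMeasurable).restrict)
      ?_
      (F' := fun y t => (2 * Real.sqrt (t*(1-t)))⁻¹ *
        ∫ ω, X ω * D2 (Real.sqrt t * x₁ + Real.sqrt (1-t) * X ω, y) ∂P)
      (((hgm.mul (hG'm x₁ y₀).measurable).aestronglyMeasurable).restrict)
      (bound := fun t => (2 * Real.sqrt (t*(1-t)))⁻¹ * (C₂ * realM))
      (ae_of_all _ fun t _ y _ => ?_)
      (g_intable.mul_const _)
      (ae_of_all _ fun t ht y _ => ?_)).2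
    · -- interval integrability at y₀
      refine (g_intable.mul_const B).mono_fun
        ((hgm.mul (hGm x₁ y₀).measurable).aestronglyMeasurable).restrict ?_
      rw [Filter.EventuallyLE, ae_restrict_iff' measurableSet_uIoc]
      refine ae_of_all _ fun t ht => ?_
      rw [huIoc] at ht
      simp only [Real.norm_eq_abs, Pi.mul_apply, abs_mul]
      have hB0 : 0 ≤ B := (abs_nonneg _).trans (Gbnd x₁ y₀ t ht)
      rw [abs_of_nonneg (hg0 t), abs_of_nonneg hB0]
      exact mul_le_mul_of_nonneg_left (Gbnd x₁ y₀ t ht) (hg0 t)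
    · -- bound
      rw [Real.norm_eq_abs, abs_mul, abs_of_nonneg (hg0 t)]
      exact mul_le_mul_of_nonneg_left (G'bnd C₂ hC₂ x₁ y t) (hg0 t)
    · -- derivative
      rw [huIoc] at ht
      exact (inner x₁ t ht y).const_mul _
  -- conclude
  constructor
  · intro p
    exact ((outer p.1 p.2).const_mul (-(σ^2)⁻¹)).differentiableAt
  · intro C hC p
    have hC0 : 0 ≤ C := (abs_nonneg _).trans (hC (0,0))
    have hd := (outer p.1 p.2).const_mul (-(σ^2)⁻¹)
    have hderiv : pderiv2 (steinSol P X σ l) p = -(σ^2)⁻¹ *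
        ∫ t in (0:ℝ)..1, (2 * Real.sqrt (t*(1-t)))⁻¹ *
          ∫ ω, X ω * D2 (Real.sqrt t * p.1 + Real.sqrt (1-t) * X ω, p.2) ∂P := by
      rw [pderiv2]
      exact hd.deriv
    rw [hderiv, abs_mul, abs_neg, abs_inv, abs_of_nonneg (sq_nonneg σ)]
    have hIb : |∫ t in (0:ℝ)..1, (2 * Real.sqrt (t*(1-t)))⁻¹ *
        ∫ ω, X ω * D2 (Real.sqrt t * p.1 + Real.sqrt (1-t) * X ω, p.2) ∂P|
        ≤ Real.pi / 2 * (C * realM) := by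
      have h1 := intervalIntegral.norm_integral_le_of_norm_le
        (μ := volume) (a := (0:ℝ)) (b := 1)
        (f := fun t => (2 * Real.sqrt (t*(1-t)))⁻¹ *
          ∫ ω, X ω * D2 (Real.sqrt t * p.1 + Real.sqrt (1-t) * X ω, p.2) ∂P)
        (g := fun t => (2 * Real.sqrt (t*(1-t)))⁻¹ * (C * realM))
        zero_le_one (ae_of_all _ fun t _ => ?_) (g_intable.mul_const _)
      · rw [Real.norm_eq_abs] at h1
        refine h1.trans ?_
        rw [intervalIntegral.integral_mul_const, g_integral]
      · rw [Real.norm_eq_abs, abs_mul, abs_of_nonneg (hg0 t)]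
        exact mul_le_mul_of_nonneg_left (G'bnd C hC p.1 p.2 t) (hg0 t)
    calc (σ^2)⁻¹ * |∫ t in (0:ℝ)..1, (2 * Real.sqrt (t*(1-t)))⁻¹ *
          ∫ ω, X ω * D2 (Real.sqrt t * p.1 + Real.sqrt (1-t) * X ω, p.2) ∂P|
        ≤ (σ^2)⁻¹ * (Real.pi / 2 * (C * realM)) :=
          mul_le_mul_of_nonneg_left hIb (by positivity)
      _ = σ⁻¹ * Real.sqrt (Real.pi/2) * C := by
          rw [hM]
          have hsq2 : Real.sqrt (Real.pi/2) = (Real.pi/2) * Real.sqrt (2/Real.pi) := by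
            have h2 : ((Real.pi/2) * Real.sqrt (2/Real.pi))^2 = Real.pi/2 := by
              rw [mul_pow, Real.sq_sqrt (by positivity)]
              field_simp
            conv_lhs => rw [← h2]
            rw [Real.sqrt_sq (by positivity)]
          rw [hsq2]
          have hσ' : σ ≠ 0 := hσ.ne'
          field_simp
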